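/- Inclusion of full polynomial spaces in the grad-div element space (Lemma on 𝐏_{r−1} ⊆ W): for integers k ≥ 2 and 1 ≤ r ≤ k+1, every vector field v ∈ 𝐏_{r−1} on ℝ³ with polynomial components of total degree at most r−1 can be written as v = ∇×q + 𝔭p with q ∈ R_r and p ∈ P_{k−1}; that is, 𝐏_{r−1} ⊆ ∇×R_r + 𝔭(P_{k−1}). -/

import Mathlib

open MeasureTheory

/-- Divergence of a vector field on ℝ³. -/
noncomputable def pdiv (v : (Fin 3 → ℝ) → (Fin 3 → ℝ)) (x : Fin 3 → ℝ) : ℝ :=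
  ∑ i : Fin 3, fderiv ℝ (fun y => v y i) x (Pi.single i 1)

/-- Curl of a vector field on ℝ³. -/
noncomputable def pcurl (v : (Fin 3 → ℝ) → (Fin 3 → ℝ)) (x : Fin 3 → ℝ) : Fin 3 → ℝ :=
  ![fderiv ℝ (fun y => v y 2) x (Pi.single 1 1) - fderiv ℝ (fun y => v y 1) x (Pi.single 2 1),
    fderiv ℝ (fun y => v y 0) x (Pi.single 2 1) - fderiv ℝ (fun y => v y 2) x (Pi.single 0 1),
    fderiv ℝ (fun y => v y 1) x (Pi.single 0 1) - fderiv ℝ (fun y => v y 0) x (Pi.single 1 1)]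

/-- Gradient of a scalar field on ℝ³. -/
noncomputable def pgrad (p : (Fin 3 → ℝ) → ℝ) (x : Fin 3 → ℝ) : Fin 3 → ℝ :=
  fun i => fderiv ℝ p x (Pi.single i 1)

/-- The Poincaré-type operator 𝔭: (𝔭u)(x) = (∫₀¹ t² u(tx) dt) x. -/
noncomputable def poin (u : (Fin 3 → ℝ) → ℝ) (x : Fin 3 → ℝ) : Fin 3 → ℝ :=
  (∫ t in (0:ℝ)..1, t ^ 2 * u (t • x)) • x

/-- `u` is a polynomial function of total degree at most `r` (P_r = {0} if r < 0). -/
def IsPolyDeg (r : ℤ) (u : (Fin 3 → ℝ) → ℝ) : Prop :=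
  ∃ p : MvPolynomial (Fin 3) ℝ, (p = 0 ∨ (p.totalDegree : ℤ) ≤ r) ∧
    ∀ x, MvPolynomial.eval x p = u x

/-- `v` is a vector field with polynomial components of total degree at most `r`. -/
def IsVecPolyDeg (r : ℤ) (v : (Fin 3 → ℝ) → (Fin 3 → ℝ)) : Prop :=
  ∀ i, IsPolyDeg r fun x => v x i

/-- `u` is a polynomial function. -/
def IsPolyFun (u : (Fin 3 → ℝ) → ℝ) : Prop :=
  ∃ p : MvPolynomial (Fin 3) ℝ, ∀ x, MvPolynomial.eval x p = u x

/-- Membership in S_k = {p ∈ (P̃_k)³ : x·p(x) = 0}. -/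
def MemS (k : ℕ) (v : (Fin 3 → ℝ) → (Fin 3 → ℝ)) : Prop :=
  (∀ i, ∃ p : MvPolynomial (Fin 3) ℝ, p.IsHomogeneous k ∧ ∀ x, MvPolynomial.eval x p = v x i) ∧
    ∀ x, ∑ i : Fin 3, x i * v x i = 0

/-- Membership in the first-family Nédélec space R_k = 𝐏_{k-1} ⊕ S_k. -/
def MemR (k : ℕ) (v : (Fin 3 → ℝ) → (Fin 3 → ℝ)) : Prop :=
  ∃ v₁ v₂, IsVecPolyDeg ((k : ℤ) - 1) v₁ ∧ MemS k v₂ ∧ v = v₁ + v₂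


section Stmt13Aux
open MvPolynomial


lemma degree_eq_sum_fin3 (d : Fin 3 →₀ ℕ) : Finsupp.degree d = ∑ i : Fin 3, d i :=
  Finset.sum_subset (Finset.subset_univ _) (fun j _ hj => Finsupp.notMem_support_iff.mp hj)

lemma hom_degree {P : MvPolynomial (Fin 3) ℝ} {n : ℕ} (h : P.IsHomogeneous n)
    {d : Fin 3 →₀ ℕ} (hd : coeff d P ≠ 0) : Finsupp.degree d = n := by
  rw [Finsupp.degree_eq_weight_one]; exact h hd

lemma X_mul_pderiv_monomial (d : Fin 3 →₀ ℕ) (a : ℝ) (i : Fin 3) :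
    X i * pderiv i (monomial d a) = monomial d (a * d i) := by
  rw [pderiv_monomial]
  by_cases h : d i = 0
  · simp [h]
  · have he : Finsupp.single i 1 + (d - Finsupp.single i 1) = d := by
      ext j
      rcases eq_or_ne j i with rfl | hj
      · simp only [Finsupp.add_apply, Finsupp.single_apply, Finsupp.tsub_apply]
        simp only [if_true, reduceIte]
        omega
      · simp [Finsupp.single_apply, (Ne.symm hj), Finsupp.tsub_apply]
    generalize a * (d i : ℝ) = b
    conv_rhs => rw [← he]
    rw [monomial_single_add, pow_one]

lemma euler {n : ℕ} {P : MvPolynomial (Fin 3) ℝ} (h : P.IsHomogeneous n) :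
    ∑ i : Fin 3, X i * pderiv i P = C (n : ℝ) * P := by
  have hP : P = ∑ d ∈ P.support, monomial d (coeff d P) :=
    (support_sum_monomial_coeff P).symm
  conv_lhs => rw [hP]
  conv_rhs => rw [hP]
  simp_rw [map_sum, Finset.mul_sum]
  rw [Finset.sum_comm]
  apply Finset.sum_congr rfl
  intro d hd
  rw [Finset.sum_congr rfl (fun i _ => X_mul_pderiv_monomial d (coeff d P) i)]
  have hdeg : (∑ i : Fin 3, (d i : ℝ)) = (n : ℝ) := by
    rw_mod_cast [← degree_eq_sum_fin3 d, hom_degree h (mem_support_iff.mp hd)]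
  rw [← map_sum (monomial d), ← Finset.mul_sum, hdeg, C_mul_monomial, mul_comm]

lemma pderiv_isHomogeneous {n : ℕ} {P : MvPolynomial (Fin 3) ℝ} (h : P.IsHomogeneous (n + 1))
    (i : Fin 3) : (pderiv i P).IsHomogeneous n := by
  rw [show pderiv i P = ∑ d ∈ P.support, pderiv i (monomial d (coeff d P)) by
    rw [← map_sum, support_sum_monomial_coeff]]
  apply IsHomogeneous.sum
  intro d hd
  rw [pderiv_monomial]
  by_cases hdi : d i = 0
  · simpa [hdi] using isHomogeneous_zero (Fin 3) ℝ n
  · apply isHomogeneous_monomial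
    have hdeg := hom_degree h (mem_support_iff.mp hd)
    rw [degree_eq_sum_fin3] at hdeg ⊢
    simp only [Finsupp.tsub_apply, Fin.sum_univ_three] at hdeg ⊢
    have h1 : Finsupp.single i 1 i = 1 := by simp
    have h2 : ∀ j, Finsupp.single i 1 j ≤ d j := by
      intro j
      rcases eq_or_ne j i with rfl | hj
      · simp only [Finsupp.single_apply]
        simp only [if_true, reduceIte]
        omega
      · simp [Finsupp.single_apply, Ne.symm hj]
    have h3 : Finsupp.single i 1 0 + Finsupp.single i 1 1 + Finsupp.single i 1 2 = 1 := by
      fin_cases i <;> simp [Finsupp.single_apply]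
    have h4 := h2 0; have h5 := h2 1; have h6 := h2 2
    omega

lemma pderiv_eq_zero_of_hom_zero {P : MvPolynomial (Fin 3) ℝ} (h : P.IsHomogeneous 0)
    (i : Fin 3) : pderiv i P = 0 := by
  rw [show pderiv i P = ∑ d ∈ P.support, pderiv i (monomial d (coeff d P)) by
    rw [← map_sum, support_sum_monomial_coeff]]
  apply Finset.sum_eq_zero
  intro d hd
  have hdeg := hom_degree h (mem_support_iff.mp hd)
  rw [Finsupp.degree_eq_zero_iff] at hdeg
  subst hdeg
  simp [pderiv_monomial]

lemma eval_smul_hom {n : ℕ} {P : MvPolynomial (Fin 3) ℝ} (h : P.IsHomogeneous n)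
    (t : ℝ) (x : Fin 3 → ℝ) : eval (t • x) P = t ^ n * eval x P := by
  rw [eval_eq', eval_eq', Finset.mul_sum]
  apply Finset.sum_congr rfl
  intro d hd
  have hdeg : (∑ i : Fin 3, d i) = n := by
    rw [← degree_eq_sum_fin3 d, hom_degree h (mem_support_iff.mp hd)]
  calc coeff d P * ∏ i, (t • x) i ^ d i
      = coeff d P * ((∏ i, t ^ d i) * ∏ i, x i ^ d i) := by
        rw [← Finset.prod_mul_distrib]
        simp [mul_pow]
    _ = t ^ n * (coeff d P * ∏ i, x i ^ d i) := by
        rw [Finset.prod_pow_eq_pow_sum, hdeg]; ring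

noncomputable def evalD (P : MvPolynomial (Fin 3) ℝ) (x : Fin 3 → ℝ) : (Fin 3 → ℝ) →L[ℝ] ℝ :=
  ∑ j : Fin 3, MvPolynomial.eval x (MvPolynomial.pderiv j P) • (ContinuousLinearMap.proj j)

lemma hasFDerivAt_eval (P : MvPolynomial (Fin 3) ℝ) (x : Fin 3 → ℝ) :
    HasFDerivAt (fun y => MvPolynomial.eval y P) (evalD P x) x := by
  induction P using MvPolynomial.induction_on with
  | C a =>
    have : (fun y : Fin 3 → ℝ => MvPolynomial.eval y (C a)) = fun _ => a := by
      funext y; simp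
    rw [this]
    have h0 : evalD (C a) x = 0 := by
      unfold evalD; simp [pderiv_C]
    rw [h0]; exact hasFDerivAt_const a x
  | add p q hp hq =>
    have : (fun y : Fin 3 → ℝ => MvPolynomial.eval y (p + q))
        = fun y => MvPolynomial.eval y p + MvPolynomial.eval y q := by
      funext y; simp
    rw [this]
    have h0 : evalD (p + q) x = evalD p x + evalD q x := by
      unfold evalD; simp [add_smul, Finset.sum_add_distrib]
    rw [h0]; exact hp.add hq
  | mul_X p i hp =>
    have : (fun y : Fin 3 → ℝ => MvPolynomial.eval y (p * X i))
        = fun y => MvPolynomial.eval y p * y i := by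
      funext y; simp
    rw [this]
    have happ : HasFDerivAt (fun y : Fin 3 → ℝ => y i)
        (ContinuousLinearMap.proj i : (Fin 3 → ℝ) →L[ℝ] ℝ) x :=
      hasFDerivAt_apply i x
    have : HasFDerivAt (fun y : Fin 3 → ℝ => MvPolynomial.eval y p * y i) _ x := hp.mul happ
    refine this.congr_fderiv ?_
    ext v
    unfold evalD
    simp only [ContinuousLinearMap.add_apply, ContinuousLinearMap.smul_apply,
      ContinuousLinearMap.coe_sum', Finset.sum_apply, ContinuousLinearMap.proj_apply,
      smul_eq_mul, pderiv_mul, pderiv_X, map_add, map_mul, eval_X]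
    rw [Fin.sum_univ_three, Fin.sum_univ_three]
    fin_cases i <;> simp [Pi.single_apply] <;> ring

lemma fderiv_eval (P : MvPolynomial (Fin 3) ℝ) (x : Fin 3 → ℝ) (i : Fin 3) :
    fderiv ℝ (fun y => eval y P) x (Pi.single i 1) = eval x (pderiv i P) := by
  rw [(hasFDerivAt_eval P x).fderiv]
  unfold evalD
  simp [Pi.single_apply]

lemma integral_pow_aux (n : ℕ) (A : ℝ) :
    ∫ t in (0:ℝ)..1, t ^ 2 * (t ^ n * A) = A / (n + 3) := by
  have h : ∀ t : ℝ, t ^ 2 * (t ^ n * A) = t ^ (n + 2) * A := fun t => by ring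
  simp_rw [h]
  rw [intervalIntegral.integral_mul_const, integral_pow, zero_pow (by omega), one_pow]
  push_cast; ring

lemma cont_aux (P : MvPolynomial (Fin 3) ℝ) (x : Fin 3 → ℝ) :
    Continuous fun t : ℝ => t ^ 2 * eval (t • x) P :=
  ((continuous_id.pow 2)).mul (P.continuous_eval.comp (continuous_id.smul continuous_const))

lemma pcurl_eval (Q : Fin 3 → MvPolynomial (Fin 3) ℝ) (x : Fin 3 → ℝ) :
    pcurl (fun y i => eval y (Q i)) x =
      ![eval x (pderiv 1 (Q 2) - pderiv 2 (Q 1)),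
        eval x (pderiv 2 (Q 0) - pderiv 0 (Q 2)),
        eval x (pderiv 0 (Q 1) - pderiv 1 (Q 0))] := by
  unfold pcurl
  simp only [map_sub, fderiv_eval]

lemma poin_eval_hom {n : ℕ} {D : MvPolynomial (Fin 3) ℝ} (h : D.IsHomogeneous n)
    (x : Fin 3 → ℝ) :
    poin (fun y => eval y D) x = (eval x D / (n + 3)) • x := by
  unfold poin
  congr 1
  simp_rw [eval_smul_hom h]
  exact integral_pow_aux n (eval x D)

lemma poin_eval_add (P1 P2 : MvPolynomial (Fin 3) ℝ) (x : Fin 3 → ℝ) :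
    poin (fun y => eval y (P1 + P2)) x
      = poin (fun y => eval y P1) x + poin (fun y => eval y P2) x := by
  unfold poin
  rw [← add_smul]
  congr 1
  simp_rw [eval_add, mul_add]
  exact intervalIntegral.integral_add ((cont_aux P1 x).intervalIntegrable 0 1)
    ((cont_aux P2 x).intervalIntegrable 0 1)

lemma poin_eval_zero (x : Fin 3 → ℝ) :
    poin (fun y => eval y (0 : MvPolynomial (Fin 3) ℝ)) x = 0 := by
  unfold poin
  simp

def Good (k r : ℕ) (v : (Fin 3 → ℝ) → (Fin 3 → ℝ)) : Prop :=
  ∃ (Q : Fin 3 → MvPolynomial (Fin 3) ℝ) (P : MvPolynomial (Fin 3) ℝ),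
    MemR r (fun y i => eval y (Q i)) ∧ IsPolyDeg ((k : ℤ) - 1) (fun y => eval y P) ∧
    ∀ x, v x = pcurl (fun y i => eval y (Q i)) x + poin (fun y => eval y P) x

lemma MemS_add {k : ℕ} {a b : (Fin 3 → ℝ) → (Fin 3 → ℝ)} (ha : MemS k a) (hb : MemS k b) :
    MemS k (a + b) := by
  refine ⟨fun i => ?_, fun x => ?_⟩
  · obtain ⟨pa, hpa, hea⟩ := ha.1 i
    obtain ⟨pb, hpb, heb⟩ := hb.1 i
    exact ⟨pa + pb, hpa.add hpb, fun x => by simp [hea, heb]⟩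
  · simp only [Pi.add_apply, mul_add, Finset.sum_add_distrib, ha.2 x, hb.2 x, add_zero]

lemma IsPolyDeg_norm {z : ℤ} (hz : 0 ≤ z) {u : (Fin 3 → ℝ) → ℝ} (h : IsPolyDeg z u) :
    ∃ P : MvPolynomial (Fin 3) ℝ, (P.totalDegree : ℤ) ≤ z ∧ ∀ x, eval x P = u x := by
  obtain ⟨P, hP | hP, he⟩ := h
  · exact ⟨P, by simp [hP]; omega, he⟩
  · exact ⟨P, hP, he⟩

lemma IsPolyDeg_add {z : ℤ} (hz : 0 ≤ z) {u v : (Fin 3 → ℝ) → ℝ}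
    (hu : IsPolyDeg z u) (hv : IsPolyDeg z v) : IsPolyDeg z (fun x => u x + v x) := by
  obtain ⟨P, hP, he⟩ := IsPolyDeg_norm hz hu
  obtain ⟨P', hP', he'⟩ := IsPolyDeg_norm hz hv
  refine ⟨P + P', Or.inr ?_, fun x => by simp [he, he']⟩
  calc ((P + P').totalDegree : ℤ) ≤ ((max P.totalDegree P'.totalDegree : ℕ) : ℤ) := by
        exact_mod_cast totalDegree_add P P'
    _ ≤ z := by rcases max_cases P.totalDegree P'.totalDegree with ⟨h1, _⟩ | ⟨h1, _⟩ <;>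
        rw [h1] <;> omega

lemma MemR_add {k : ℕ} {a b : (Fin 3 → ℝ) → (Fin 3 → ℝ)} (hk : 1 ≤ k)
    (ha : MemR k a) (hb : MemR k b) : MemR k (a + b) := by
  obtain ⟨a1, a2, ha1, ha2, haeq⟩ := ha
  obtain ⟨b1, b2, hb1, hb2, hbeq⟩ := hb
  refine ⟨a1 + b1, a2 + b2, fun i => ?_, MemS_add ha2 hb2, by rw [haeq, hbeq]; abel⟩
  have h := IsPolyDeg_add (z := (k : ℤ) - 1) (by omega) (ha1 i) (hb1 i)
  convert h using 2
  rfl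

lemma Good_zero {k r : ℕ} (hk : 1 ≤ k) (hr : 1 ≤ r) : Good k r 0 := by
  refine ⟨fun _ => 0, 0, ?_, ⟨0, Or.inl rfl, fun x => rfl⟩, fun x => ?_⟩
  · refine ⟨fun y i => eval y ((fun _ => (0:MvPolynomial (Fin 3) ℝ)) i), 0,
      fun i => ⟨0, Or.inl rfl, fun x => by simp⟩,
      ⟨fun i => ⟨0, isHomogeneous_zero _ _ r, fun x => by simp⟩, fun x => by simp⟩, ?_⟩
    funext y; simp
  · rw [pcurl_eval, poin_eval_zero]
    funext i
    fin_cases i <;> simp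

lemma Good_add {k r : ℕ} (hk : 1 ≤ k) (hr : 1 ≤ r) {v w : (Fin 3 → ℝ) → (Fin 3 → ℝ)}
    (hv : Good k r v) (hw : Good k r w) : Good k r (v + w) := by
  obtain ⟨Q1, P1, hm1, hp1, hi1⟩ := hv
  obtain ⟨Q2, P2, hm2, hp2, hi2⟩ := hw
  refine ⟨fun i => Q1 i + Q2 i, P1 + P2, ?_, ?_, fun x => ?_⟩
  · have := MemR_add hr hm1 hm2
    convert this using 1
    funext y i
    simp
  · have h := IsPolyDeg_add (z := (k:ℤ)-1) (by omega) hp1 hp2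
    convert h using 1
    funext y
    simp
  · rw [pcurl_eval, poin_eval_add, Pi.add_apply, hi1 x, hi2 x, pcurl_eval, pcurl_eval]
    funext i
    fin_cases i <;> simp [Matrix.vecHead, Matrix.vecTail] <;> ring

set_option maxHeartbeats 1000000 in
lemma key {k r m : ℕ} (hk : 2 ≤ k) (hr2 : r ≤ k + 1) (hm : m + 1 ≤ r)
    (V : Fin 3 → MvPolynomial (Fin 3) ℝ) (hV : ∀ i, (V i).IsHomogeneous m) :
    Good k r (fun x i => eval x (V i)) := by
  obtain ⟨c, hc_def⟩ : ∃ c : ℝ, c = ((m : ℝ) + 2)⁻¹ := ⟨_, rfl⟩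
  have hmne : ((m : ℝ) + 2) ≠ 0 := by positivity
  have hc : (C c : MvPolynomial (Fin 3) ℝ) * (C ((m : ℝ)) + 2) = 1 := by
    rw [show (2 : MvPolynomial (Fin 3) ℝ) = C 2 from (map_ofNat C 2).symm, ← map_add,
      ← map_mul, hc_def, inv_mul_cancel₀ hmne, map_one]
  obtain ⟨D, hD_def⟩ : ∃ D : MvPolynomial (Fin 3) ℝ,
      D = pderiv 0 (V 0) + pderiv 1 (V 1) + pderiv 2 (V 2) := ⟨_, rfl⟩
  have hDcase : D = 0 ∨ D.IsHomogeneous (m - 1) ∧ 1 ≤ m := by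
    cases m with
    | zero =>
      left
      rw [hD_def, pderiv_eq_zero_of_hom_zero (hV 0) 0, pderiv_eq_zero_of_hom_zero (hV 1) 1,
        pderiv_eq_zero_of_hom_zero (hV 2) 2]
      simp
    | succ m' =>
      right
      refine ⟨?_, Nat.succ_le_succ (Nat.zero_le _)⟩
      rw [hD_def]
      simpa using ((pderiv_isHomogeneous (hV 0) 0).add (pderiv_isHomogeneous (hV 1) 1)).add
        (pderiv_isHomogeneous (hV 2) 2)
  have hcast : 1 ≤ m → ((m - 1 : ℕ) : ℝ) = (m : ℝ) - 1 := fun h => by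
    rw [Nat.cast_sub h]; norm_num
  have hDe : X 0 * pderiv 0 D + X 1 * pderiv 1 D + X 2 * pderiv 2 D = C ((m : ℝ) - 1) * D := by
    rcases hDcase with h | ⟨h, hm1⟩
    · simp [h]
    · have he := euler h
      rw [Fin.sum_univ_three] at he
      rw [he, hcast hm1]
  have hDdeg : (D.totalDegree : ℤ) ≤ (k : ℤ) - 1 := by
    rcases hDcase with h | ⟨h, hm1⟩
    · rw [h]; simp; omega
    · have := h.totalDegree_le
      omega
  have hDXhom : ∀ i : Fin 3, ((C c * D * X i) : MvPolynomial (Fin 3) ℝ).IsHomogeneous m := by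
    rcases hDcase with h | ⟨h, hm1⟩
    · intro i; rw [h]; simpa using isHomogeneous_zero (Fin 3) ℝ m
    · intro i
      have h1 := (h.C_mul c).mul (isHomogeneous_X ℝ i)
      rwa [Nat.sub_add_cancel hm1] at h1
  obtain ⟨W0, hW0⟩ : ∃ w : MvPolynomial (Fin 3) ℝ, w = V 0 - C c * D * X 0 := ⟨_, rfl⟩
  obtain ⟨W1, hW1⟩ : ∃ w : MvPolynomial (Fin 3) ℝ, w = V 1 - C c * D * X 1 := ⟨_, rfl⟩
  obtain ⟨W2, hW2⟩ : ∃ w : MvPolynomial (Fin 3) ℝ, w = V 2 - C c * D * X 2 := ⟨_, rfl⟩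
  have hWhom0 : W0.IsHomogeneous m := hW0 ▸ (hV 0).sub (hDXhom 0)
  have hWhom1 : W1.IsHomogeneous m := hW1 ▸ (hV 1).sub (hDXhom 1)
  have hWhom2 : W2.IsHomogeneous m := hW2 ▸ (hV 2).sub (hDXhom 2)
  have he0 : X 0 * pderiv 0 W0 + X 1 * pderiv 1 W0 + X 2 * pderiv 2 W0 = C (m : ℝ) * W0 := by
    have he := euler hWhom0; rwa [Fin.sum_univ_three] at he
  have he1 : X 0 * pderiv 0 W1 + X 1 * pderiv 1 W1 + X 2 * pderiv 2 W1 = C (m : ℝ) * W1 := by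
    have he := euler hWhom1; rwa [Fin.sum_univ_three] at he
  have he2 : X 0 * pderiv 0 W2 + X 1 * pderiv 1 W2 + X 2 * pderiv 2 W2 = C (m : ℝ) * W2 := by
    have he := euler hWhom2; rwa [Fin.sum_univ_three] at he
  have pd01 : pderiv (0 : Fin 3) (X (1 : Fin 3) : MvPolynomial (Fin 3) ℝ) = 0 :=
    pderiv_X_of_ne (by decide)
  have pd02 : pderiv (0 : Fin 3) (X (2 : Fin 3) : MvPolynomial (Fin 3) ℝ) = 0 :=
    pderiv_X_of_ne (by decide)
  have pd10 : pderiv (1 : Fin 3) (X (0 : Fin 3) : MvPolynomial (Fin 3) ℝ) = 0 :=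
    pderiv_X_of_ne (by decide)
  have pd12 : pderiv (1 : Fin 3) (X (2 : Fin 3) : MvPolynomial (Fin 3) ℝ) = 0 :=
    pderiv_X_of_ne (by decide)
  have pd20 : pderiv (2 : Fin 3) (X (0 : Fin 3) : MvPolynomial (Fin 3) ℝ) = 0 :=
    pderiv_X_of_ne (by decide)
  have pd21 : pderiv (2 : Fin 3) (X (1 : Fin 3) : MvPolynomial (Fin 3) ℝ) = 0 :=
    pderiv_X_of_ne (by decide)
  have hCm1 : (C ((m : ℝ) - 1) : MvPolynomial (Fin 3) ℝ) = C ((m : ℝ)) - 1 := by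
    rw [map_sub, map_one]
  have hdiv : pderiv 0 W0 + pderiv 1 W1 + pderiv 2 W2 = 0 := by
    rw [hW0, hW1, hW2]
    simp only [map_sub, pderiv_mul, pderiv_C_mul, pderiv_C, pderiv_X_self, mul_one, zero_mul,
      add_zero, zero_add, mul_zero]
    linear_combination (-1 : MvPolynomial (Fin 3) ℝ) * hD_def + (-(C c)) * hDe + (-D) * hc +
      (-(C c * D)) * hCm1
  obtain ⟨Q0, hQ0⟩ : ∃ q : MvPolynomial (Fin 3) ℝ, q = C c * (X 2 * W1 - X 1 * W2) := ⟨_, rfl⟩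
  obtain ⟨Q1, hQ1⟩ : ∃ q : MvPolynomial (Fin 3) ℝ, q = C c * (X 0 * W2 - X 2 * W0) := ⟨_, rfl⟩
  obtain ⟨Q2, hQ2⟩ : ∃ q : MvPolynomial (Fin 3) ℝ, q = C c * (X 1 * W0 - X 0 * W1) := ⟨_, rfl⟩
  have claim0 : pderiv 1 Q2 - pderiv 2 Q1 = W0 := by
    rw [hQ1, hQ2]
    simp only [pderiv_C_mul, map_sub, pderiv_mul, pderiv_C, pderiv_X_self, pd01, pd02, pd10, pd12, pd20,
      pd21, zero_mul, mul_one, one_mul, add_zero, zero_add, mul_zero]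
    linear_combination (C c) * he0 + (-(C c) * X 0) * hdiv + W0 * hc
  have claim1 : pderiv 2 Q0 - pderiv 0 Q2 = W1 := by
    rw [hQ0, hQ2]
    simp only [pderiv_C_mul, map_sub, pderiv_mul, pderiv_C, pderiv_X_self, pd01, pd02, pd10, pd12, pd20,
      pd21, zero_mul, mul_one, one_mul, add_zero, zero_add, mul_zero]
    linear_combination (C c) * he1 + (-(C c) * X 1) * hdiv + W1 * hc
  have claim2 : pderiv 0 Q1 - pderiv 1 Q0 = W2 := by
    rw [hQ0, hQ1]
    simp only [pderiv_C_mul, map_sub, pderiv_mul, pderiv_C, pderiv_X_self, pd01, pd02, pd10, pd12, pd20,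
      pd21, zero_mul, mul_one, one_mul, add_zero, zero_add, mul_zero]
    linear_combination (C c) * he2 + (-(C c) * X 2) * hdiv + W2 * hc
  have g0 : Q0.IsHomogeneous (m + 1) := by
    rw [hQ0]
    have h1 := (((isHomogeneous_X ℝ 2).mul hWhom1).sub ((isHomogeneous_X ℝ 1).mul hWhom2)).C_mul c
    rwa [add_comm] at h1
  have g1 : Q1.IsHomogeneous (m + 1) := by
    rw [hQ1]
    have h1 := (((isHomogeneous_X ℝ 0).mul hWhom2).sub ((isHomogeneous_X ℝ 2).mul hWhom0)).C_mul c
    rwa [add_comm] at h1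
  have g2 : Q2.IsHomogeneous (m + 1) := by
    rw [hQ2]
    have h1 := (((isHomogeneous_X ℝ 1).mul hWhom0).sub ((isHomogeneous_X ℝ 0).mul hWhom1)).C_mul c
    rwa [add_comm] at h1
  have hQhom : ∀ i, ((![Q0, Q1, Q2] : Fin 3 → MvPolynomial (Fin 3) ℝ) i).IsHomogeneous
      (m + 1) := by
    intro i
    fin_cases i
    · exact g0
    · exact g1
    · exact g2
  refine ⟨![Q0, Q1, Q2], D, ?_, ⟨D, Or.inr hDdeg, fun x => rfl⟩, fun x => ?_⟩
  · rcases eq_or_lt_of_le hm with heq | hlt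
    · refine ⟨fun _ _ => 0, _, fun i => ⟨0, Or.inl rfl, fun x => by simp⟩,
        ⟨fun i => ⟨![Q0, Q1, Q2] i, heq ▸ hQhom i, fun x => rfl⟩, fun x => ?_⟩,
        by funext y i; simp⟩
      rw [Fin.sum_univ_three]
      show x 0 * eval x Q0 + x 1 * eval x Q1 + x 2 * eval x Q2 = 0
      rw [hQ0, hQ1, hQ2]
      simp only [eval_mul, eval_sub, eval_C, eval_X]
      ring
    · refine ⟨_, fun _ _ => 0, fun i => ⟨![Q0, Q1, Q2] i, Or.inr ?_, fun x => rfl⟩,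
        ⟨fun i => ⟨0, isHomogeneous_zero _ _ r, fun x => by simp⟩, fun x => by simp⟩,
        by funext y i; simp⟩
      have := (hQhom i).totalDegree_le
      omega
  · rw [pcurl_eval]
    have hpoin : poin (fun y => eval y D) x = fun i => c * (eval x D * x i) := by
      rcases hDcase with h | ⟨h, hm1⟩
      · rw [h, poin_eval_zero]
        funext i
        simp [h]
      · rw [poin_eval_hom h x]
        funext i
        simp only [Pi.smul_apply, smul_eq_mul, hcast hm1, hc_def]
        have : (m : ℝ) - 1 + 3 = (m : ℝ) + 2 := by ring
        rw [this]
        field_simp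
    rw [hpoin]
    funext i
    fin_cases i
    · show eval x (V 0) = eval x (pderiv 1 Q2 - pderiv 2 Q1) + c * (eval x D * x 0)
      rw [claim0, hW0]
      simp only [eval_sub, eval_mul, eval_C, eval_X]
      ring
    · show eval x (V 1) = eval x (pderiv 2 Q0 - pderiv 0 Q2) + c * (eval x D * x 1)
      rw [claim1, hW1]
      simp only [eval_sub, eval_mul, eval_C, eval_X]
      ring
    · show eval x (V 2) = eval x (pderiv 0 Q1 - pderiv 1 Q0) + c * (eval x D * x 2)
      rw [claim2, hW2]
      simp only [eval_sub, eval_mul, eval_C, eval_X]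
      ring

end Stmt13Aux

open MvPolynomial in
/-- 𝐏_{r-1} ⊆ ∇×R_r + 𝔭(P_{k-1}) for k ≥ 2, 1 ≤ r ≤ k+1. -/
theorem stmt_13 (k r : ℕ) (hk : 2 ≤ k) (hr1 : 1 ≤ r) (hr2 : r ≤ k + 1)
    (v : (Fin 3 → ℝ) → (Fin 3 → ℝ)) (hv : IsVecPolyDeg ((r : ℤ) - 1) v) :
    ∃ (q : (Fin 3 → ℝ) → (Fin 3 → ℝ)) (p : (Fin 3 → ℝ) → ℝ),
      MemR r q ∧ IsPolyDeg ((k : ℤ) - 1) p ∧ ∀ x, v x = pcurl q x + poin p x := by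
  choose P hPd hPe using hv
  have hPlt : ∀ i, (P i).totalDegree < r := by
    intro i
    rcases hPd i with h | h
    · rw [h, totalDegree_zero]; omega
    · omega
  have hsum : ∀ i, ∑ m ∈ Finset.range r, homogeneousComponent m (P i) = P i := by
    intro i
    have h2 : ∀ n ∈ Finset.range r, n ∉ Finset.range ((P i).totalDegree + 1) →
        homogeneousComponent n (P i) = 0 := by
      intro n _ hn
      refine homogeneousComponent_eq_zero _ _ ?_
      simp only [Finset.mem_range, not_lt] at hn
      omega
    rw [← Finset.sum_subset (Finset.range_subset_range.mpr (hPlt i)) h2]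
    exact sum_homogeneousComponent (P i)
  have hGood : ∀ s : Finset ℕ, (∀ n ∈ s, n + 1 ≤ r) →
      Good k r (∑ n ∈ s, fun x i => eval x (homogeneousComponent n (P i))) := by
    intro s
    induction s using Finset.induction_on with
    | empty => intro _; simpa using Good_zero (by omega) hr1
    | @insert n s hni ih =>
      intro hmem
      rw [Finset.sum_insert hni]
      exact Good_add (by omega) hr1
        (key hk hr2 (hmem _ (Finset.mem_insert_self _ _)) _
          (fun i => homogeneousComponent_isHomogeneous n (P i)))
        (ih fun n hn => hmem n (Finset.mem_insert_of_mem hn))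
  have hG := hGood (Finset.range r) (fun n hn => by
    have := Finset.mem_range.mp hn; omega)
  have hveq : v = ∑ n ∈ Finset.range r, fun x i => eval x (homogeneousComponent n (P i)) := by
    funext x
    rw [Finset.sum_apply]
    funext i
    rw [Finset.sum_apply]
    calc v x i = eval x (P i) := (hPe i x).symm
      _ = eval x (∑ m ∈ Finset.range r, homogeneousComponent m (P i)) := by rw [hsum i]
      _ = ∑ m ∈ Finset.range r, eval x (homogeneousComponent m (P i)) := map_sum _ _ _
  obtain ⟨Q, Pp, hm, hp, hi⟩ := hG
  exact ⟨_, _, hm, hp, fun x => by rw [hveq]; exact hi x⟩
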